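/- Let G_n be the caterpillar on 3n vertices with central path v_1,…,v_n where each v_i is adjacent to exactly two leaves. Then λ_H(G_n) = n. -/

import Mathlib

/-- The caterpillar on `3n` vertices: central path `v_0, …, v_{n-1}` (the `Sum.inl` vertices),
each `v_i` adjacent to exactly two leaves `u_{2i}` and `u_{2i+1}` (the `Sum.inr` vertices). -/
def caterpillar2 (n : ℕ) : SimpleGraph (Fin n ⊕ Fin (2 * n)) :=
  SimpleGraph.fromRel (fun a b =>
    match a, b with
    | Sum.inl i, Sum.inl j => i.val + 1 = j.val
    | Sum.inl i, Sum.inr j => j.val = 2 * i.val ∨ j.val = 2 * i.val + 1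
    | _, _ => False)

open SimpleGraph Walk

section Generic

lemma Cat2.getVert_eq_support_getElem {V : Type*} {G : SimpleGraph V} {u v : V} (p : G.Walk u v)
    {i : ℕ} (h : i ≤ p.length) :
    p.getVert i = p.support[i]'(by simp [Walk.length_support]; omega) := by
  induction p generalizing i with
  | nil => simp at h; simp [h]
  | cons hadj q ih =>
    cases i with
    | zero => simp
    | succ j =>
      simp only [Walk.length_cons] at h
      simp only [Walk.getVert_cons_succ, Walk.support_cons, List.getElem_cons_succ]
      exact ih (by omega)

lemma Cat2.two_distinct_neighbors {V : Type*} [Fintype V] [DecidableEq V] {G : SimpleGraph V}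
    (hG : G.IsHamiltonian) (hcard : 3 ≤ Fintype.card V) (w : V) :
    ∃ x y, x ≠ y ∧ G.Adj w x ∧ G.Adj w y := by
  obtain ⟨a, p, hp⟩ := hG (by omega)
  have hw : w ∈ p.support := hp.mem_support w
  set q := p.rotate w hw with hq
  have hc : q.IsCycle := hp.isCycle.rotate hw
  have h3 : 3 ≤ q.length := hc.three_le_length
  have hlen : q.support.length = q.length + 1 := q.length_support
  have htl : q.support.tail.length = q.length := by simp [List.length_tail, hlen]
  refine ⟨q.getVert 1, q.getVert (q.length - 1), ?_, ?_, ?_⟩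
  · have h1 : q.getVert 1 = q.support[1]'(by omega) :=
      Cat2.getVert_eq_support_getElem q (by omega)
    have h2 : q.getVert (q.length - 1) = q.support[q.length-1]'(by omega) :=
      Cat2.getVert_eq_support_getElem q (by omega)
    rw [h1, h2]
    intro heq
    have hnd : q.support.tail.Nodup := hc.2
    have heq' : q.support.tail[0]'(by omega) = q.support.tail[q.length-2]'(by omega) := by
      rw [List.getElem_tail, List.getElem_tail]
      convert heq using 2
      omega
    have := (List.Nodup.getElem_inj_iff hnd).mp heq'
    omega
  · have := q.adj_getVert_succ (i := 0) (by omega)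
    simpa using this
  · have := q.adj_getVert_succ (i := q.length - 1) (by omega)
    rw [show q.length - 1 + 1 = q.length by omega, q.getVert_length] at this
    exact this.symm

end Generic

namespace Cat2

variable (n : ℕ) (hn : 0 < n)

/-- leaf vertex `u_{k mod 2n}` -/
def lf (k : ℕ) : Fin n ⊕ Fin (2 * n) := Sum.inr ⟨k % (2 * n), Nat.mod_lt _ (by omega)⟩

/-- path vertex `v_{k mod n}` -/
def vv (k : ℕ) : Fin n ⊕ Fin (2 * n) := Sum.inl ⟨k % n, Nat.mod_lt _ hn⟩

/-- the new edges closing the caterpillar into a hamiltonian graph -/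
def newE : Set (Sym2 (Fin n ⊕ Fin (2 * n))) :=
  Set.range (fun i : Fin n => s(lf n hn (2 * i.1 + 1), lf n hn (2 * i.1 + 2)))

def Hgraph : SimpleGraph (Fin n ⊕ Fin (2 * n)) :=
  caterpillar2 n ⊔ SimpleGraph.fromEdgeSet (newE n hn)

lemma lf_congr {a b : ℕ} (h : a % (2 * n) = b % (2 * n)) : lf n hn a = lf n hn b := by
  simp [lf, Fin.ext_iff, h]

lemma lf_inj {a b : ℕ} (ha : a < 2 * n) (hb : b < 2 * n) (h : lf n hn a = lf n hn b) : a = b := by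
  simpa [lf, Nat.mod_eq_of_lt, ha, hb] using h

lemma adj_vl {k : ℕ} (hk : k < n) : (caterpillar2 n).Adj (vv n hn k) (lf n hn (2 * k)) := by
  rw [caterpillar2, fromRel_adj]
  refine ⟨by simp [vv, lf], Or.inl ?_⟩
  simp [vv, lf, Nat.mod_eq_of_lt, hk, Nat.mod_eq_of_lt (show 2*k < 2*n by omega)]

lemma adj_vr {k : ℕ} (hk : k < n) : (caterpillar2 n).Adj (vv n hn k) (lf n hn (2 * k + 1)) := by
  rw [caterpillar2, fromRel_adj]
  refine ⟨by simp [vv, lf], Or.inl ?_⟩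
  simp [vv, lf, Nat.mod_eq_of_lt, hk, Nat.mod_eq_of_lt (show 2*k+1 < 2*n by omega)]

lemma adj_ll {k : ℕ} (hk : k < n) :
    (SimpleGraph.fromEdgeSet (newE n hn)).Adj (lf n hn (2 * k + 1)) (lf n hn (2 * k + 2)) := by
  rw [fromEdgeSet_adj]
  constructor
  · exact ⟨⟨k, hk⟩, rfl⟩
  · intro h
    have h1 : (2*k+1) % (2*n) = 2*k+1 := Nat.mod_eq_of_lt (by omega)
    rcases Nat.lt_or_ge (2*k+2) (2*n) with h2 | h2
    · have := lf_inj n hn (by omega) h2 h; omega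
    · have hk2 : 2*k+2 = 2*n := by omega
      have : (2*k+2) % (2*n) = 0 := by rw [hk2]; simp
      simp [lf, Fin.ext_iff, h1, this] at h

lemma cat_not_adj_inr (a b : Fin (2 * n)) : ¬ (caterpillar2 n).Adj (Sum.inr a) (Sum.inr b) := by
  rw [caterpillar2, fromRel_adj]
  rintro ⟨-, h | h⟩ <;> exact h

lemma cat_adj_inr_iff (a : Fin (2 * n)) (x : Fin n ⊕ Fin (2 * n)) :
    (caterpillar2 n).Adj (Sum.inr a) x ↔
      ∃ i : Fin n, x = Sum.inl i ∧ (a.1 = 2 * i.1 ∨ a.1 = 2 * i.1 + 1) := by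
  rw [caterpillar2, fromRel_adj]
  constructor
  · rintro ⟨hne, h | h⟩
    · cases x with
      | inl i => exact ⟨i, rfl, by simpa using h⟩
      | inr j => simp at h
    · cases x with
      | inl i => exact ⟨i, rfl, by simpa using h⟩
      | inr j => simp at h
  · rintro ⟨i, rfl, h⟩
    exact ⟨by simp, Or.inr (by simpa using h)⟩

section Walks

variable {H : SimpleGraph (Fin n ⊕ Fin (2 * n))}
  (hvl : ∀ {k : ℕ}, k < n → H.Adj (vv n hn k) (lf n hn (2 * k)))
  (hvr : ∀ {k : ℕ}, k < n → H.Adj (vv n hn k) (lf n hn (2 * k + 1)))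
  (hll : ∀ {k : ℕ}, k < n → H.Adj (lf n hn (2 * k + 1)) (lf n hn (2 * k + 2)))

include hvl hvr hll in
lemma exists_pwalk : ∀ m k, k + (m + 1) = n →
    ∃ w : H.Walk (lf n hn (2 * k)) (lf n hn (2 * n - 1)),
      w.support = (List.range' k (m + 1)).flatMap
        (fun j => [lf n hn (2 * j), vv n hn j, lf n hn (2 * j + 1)]) ∧
      ∀ e ∈ w.edges, e ≠ s(lf n hn (2 * n - 1), lf n hn 0) := by
  intro m
  induction m with
  | zero =>
    intro k hk
    rw [show 2 * n - 1 = 2 * k + 1 by omega]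
    refine ⟨.cons ((hvl (by omega)).symm) (.cons (hvr (by omega)) .nil), ?_, ?_⟩
    · simp [List.range'_one]
    · intro e he
      simp only [Walk.edges_cons, Walk.edges_nil, List.mem_cons, List.mem_singleton] at he
      rcases he with rfl | rfl | h
      · simp [Sym2.eq_iff, lf, vv]
      · simp [Sym2.eq_iff, lf, vv]
      · simp at h
  | succ m ih =>
    intro k hk
    obtain ⟨w0, hs', he'⟩ := ih (k + 1) (by omega)
    let w' := w0.copy (show lf n hn (2 * (k + 1)) = lf n hn (2 * k + 2) from by
      rw [show 2 * (k + 1) = 2 * k + 2 by ring]) rfl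
    have hs'' : w'.support = w0.support := Walk.support_copy _ _ _
    have he'' : w'.edges = w0.edges := Walk.edges_copy _ _ _
    refine ⟨.cons ((hvl (by omega)).symm)
        (.cons (hvr (by omega)) (.cons (hll (by omega)) w')), ?_, ?_⟩
    · rw [List.range'_succ]
      simp only [Walk.support_cons, hs'', hs']
      simp
    · intro e he
      simp only [Walk.edges_cons, List.mem_cons] at he
      rcases he with rfl | rfl | rfl | h
      · simp [Sym2.eq_iff, lf, vv]
      · simp [Sym2.eq_iff, lf, vv]
      · have b1 : (2 * k + 1) % (2 * n) = 2 * k + 1 := Nat.mod_eq_of_lt (by omega)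
        have b2 : (2 * k + 2) % (2 * n) = 2 * k + 2 := Nat.mod_eq_of_lt (by omega)
        have b3 : (2 * n - 1) % (2 * n) = 2 * n - 1 := Nat.mod_eq_of_lt (by omega)
        have b4 : 0 % (2 * n) = 0 := Nat.zero_mod _
        simp only [lf, b1, b2, b3, b4]
        intro hcon
        rw [Sym2.eq_iff] at hcon
        simp only [Sum.inr.injEq, Fin.mk.injEq] at hcon
        omega
      · exact he' e (he'' ▸ h)

end Walks

lemma support_list_nodup :
    ((List.range' 0 n).flatMap
      (fun j => [lf n hn (2 * j), vv n hn j, lf n hn (2 * j + 1)])).Nodup := by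
  rw [List.nodup_flatMap]
  rw [← List.range_eq_range']
  constructor
  · intro j hj
    rw [List.mem_range] at hj
    have b1 : (2 * j) % (2 * n) = 2 * j := Nat.mod_eq_of_lt (by omega)
    have b2 : (2 * j + 1) % (2 * n) = 2 * j + 1 := Nat.mod_eq_of_lt (by omega)
    simp [lf, vv, Fin.ext_iff, b1, b2]
  · refine (List.pairwise_lt_range (n := n)).imp_of_mem ?_
    intro i j hi hj hij
    rw [List.mem_range] at hi hj
    have c1 : (2 * i) % (2 * n) = 2 * i := Nat.mod_eq_of_lt (by omega)
    have c2 : (2 * i + 1) % (2 * n) = 2 * i + 1 := Nat.mod_eq_of_lt (by omega)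
    have c3 : (2 * j) % (2 * n) = 2 * j := Nat.mod_eq_of_lt (by omega)
    have c4 : (2 * j + 1) % (2 * n) = 2 * j + 1 := Nat.mod_eq_of_lt (by omega)
    have c5 : i % n = i := Nat.mod_eq_of_lt hi
    have c6 : j % n = j := Nat.mod_eq_of_lt hj
    intro x hx hx'
    simp only [Function.onFun, List.mem_cons, List.mem_singleton, List.not_mem_nil] at hx hx'
    rcases hx with rfl | rfl | rfl | h <;>
      [skip; skip; skip; exact h] <;>
      rcases hx' with h' | h' | h' | h' <;>
      simp_all [lf, vv, Fin.ext_iff, c1, c2, c3, c4, c5, c6] <;> omega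

lemma support_list_mem (x : Fin n ⊕ Fin (2 * n)) :
    x ∈ (List.range' 0 n).flatMap
      (fun j => [lf n hn (2 * j), vv n hn j, lf n hn (2 * j + 1)]) := by
  rw [← List.range_eq_range', List.mem_flatMap]
  cases x with
  | inl i =>
    refine ⟨i.1, List.mem_range.mpr i.2, ?_⟩
    simp [vv, Fin.ext_iff, Nat.mod_eq_of_lt i.2]
  | inr j =>
    refine ⟨j.1 / 2, List.mem_range.mpr (by omega), ?_⟩
    have hj := j.2
    rcases Nat.even_or_odd j.1 with he | ho
    · have h1 : 2 * (j.1 / 2) = j.1 := by rcases he with ⟨c, hc⟩; omega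
      have h2 : (2 * (j.1 / 2)) % (2 * n) = j.1 := by rw [h1]; exact Nat.mod_eq_of_lt j.2
      simp [lf, vv, Fin.ext_iff, h2]
    · have h1 : 2 * (j.1 / 2) + 1 = j.1 := by rcases ho with ⟨c, hc⟩; omega
      have h2 : (2 * (j.1 / 2) + 1) % (2 * n) = j.1 := by rw [h1]; exact Nat.mod_eq_of_lt j.2
      simp [lf, vv, Fin.ext_iff, h2]

lemma hgraph_hamiltonian : (Hgraph n hn).IsHamiltonian := by
  intro _
  have hvl : ∀ {k : ℕ}, k < n → (Hgraph n hn).Adj (vv n hn k) (lf n hn (2 * k)) :=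
    fun hk => (sup_adj _ _ _ _).mpr (Or.inl (adj_vl n hn hk))
  have hvr : ∀ {k : ℕ}, k < n → (Hgraph n hn).Adj (vv n hn k) (lf n hn (2 * k + 1)) :=
    fun hk => (sup_adj _ _ _ _).mpr (Or.inl (adj_vr n hn hk))
  have hll : ∀ {k : ℕ}, k < n →
      (Hgraph n hn).Adj (lf n hn (2 * k + 1)) (lf n hn (2 * k + 2)) :=
    fun hk => (sup_adj _ _ _ _).mpr (Or.inr (adj_ll n hn hk))
  obtain ⟨w, hs, he⟩ := exists_pwalk n hn hvl hvr hll (n - 1) 0 (by omega)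
  rw [show n - 1 + 1 = n by omega] at hs
  have hlf0 : lf n hn (2 * 0) = lf n hn 0 := lf_congr n hn (by norm_num)
  have hclose : (Hgraph n hn).Adj (lf n hn (2 * n - 1)) (lf n hn (2 * 0)) := by
    have h := hll (show n - 1 < n by omega)
    rwa [lf_congr n hn (show (2 * (n-1) + 1) % (2*n) = (2*n-1) % (2*n) by congr 1; omega),
      lf_congr n hn (show (2 * (n-1) + 2) % (2*n) = (2 * 0) % (2*n) by
        rw [show 2 * (n-1) + 2 = 2 * n by omega]; simp)] at h
  refine ⟨lf n hn (2 * n - 1), Walk.cons hclose w, ?_⟩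
  have hpath : w.IsPath := Walk.IsPath.mk' (hs ▸ support_list_nodup n hn)
  have hcyc : (Walk.cons hclose w).IsCycle := by
    rw [Walk.cons_isCycle_iff]
    refine ⟨hpath, fun hmem => ?_⟩
    exact he _ hmem (by rw [hlf0])
  rw [Walk.isHamiltonianCycle_iff_isCycle_and_support_count_tail_eq_one]
  refine ⟨hcyc, fun a => ?_⟩
  rw [Walk.support_cons, List.tail_cons]
  exact @List.count_eq_one_of_mem _ instBEqOfDecidableEq _ _ _ (hs ▸ support_list_nodup n hn)
    (hs ▸ support_list_mem n hn a)

lemma newE_not_diag {e : Sym2 (Fin n ⊕ Fin (2 * n))} (he : e ∈ newE n hn) : ¬ e.IsDiag := by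
  obtain ⟨i, rfl⟩ := he
  rw [Sym2.mk_isDiag_iff]
  intro h
  have h1 : (2*i.1+1) % (2*n) = 2*i.1+1 := Nat.mod_eq_of_lt (by have := i.2; omega)
  rcases Nat.lt_or_ge (2*i.1+2) (2*n) with h2 | h2
  · have := lf_inj n hn (by omega) h2 h; omega
  · have hk2 : 2*i.1+2 = 2*n := by have := i.2; omega
    have : (2*i.1+2) % (2*n) = 0 := by rw [hk2]; simp
    simp [lf, Fin.ext_iff, h1, this] at h

lemma newE_not_cat {e : Sym2 (Fin n ⊕ Fin (2 * n))} (he : e ∈ newE n hn) :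
    e ∉ (caterpillar2 n).edgeSet := by
  obtain ⟨i, rfl⟩ := he
  rw [SimpleGraph.mem_edgeSet]
  exact cat_not_adj_inr n _ _

lemma diff_eq : (Hgraph n hn).edgeSet \ (caterpillar2 n).edgeSet = newE n hn := by
  rw [Hgraph, edgeSet_sup, edgeSet_fromEdgeSet]
  ext e
  simp only [Set.mem_diff, Set.mem_union, Set.mem_setOf_eq]
  constructor
  · rintro ⟨hcat | ⟨hne, -⟩, hncat⟩
    · exact absurd hcat hncat
    · exact hne
  · intro he
    exact ⟨Or.inr ⟨he, newE_not_diag n hn he⟩, newE_not_cat n hn he⟩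

lemma newE_ncard : (newE n hn).ncard = n := by
  have hinj : Function.Injective
      (fun i : Fin n => s(lf n hn (2 * i.1 + 1), lf n hn (2 * i.1 + 2))) := by
    intro i i' h
    simp only [Sym2.eq_iff] at h
    have b1 : (2*i.1+1) % (2*n) = 2*i.1+1 := Nat.mod_eq_of_lt (by have := i.2; omega)
    have b1' : (2*i'.1+1) % (2*n) = 2*i'.1+1 := Nat.mod_eq_of_lt (by have := i'.2; omega)
    have b2 : (2*i.1+2) % (2*n) = if i.1 + 1 = n then 0 else 2*i.1+2 := by
      split
      · rw [show 2*i.1+2 = 2*n by omega]; simp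
      · exact Nat.mod_eq_of_lt (by have := i.2; omega)
    have b2' : (2*i'.1+2) % (2*n) = if i'.1 + 1 = n then 0 else 2*i'.1+2 := by
      split
      · rw [show 2*i'.1+2 = 2*n by omega]; simp
      · exact Nat.mod_eq_of_lt (by have := i'.2; omega)
    have hn2 : 0 < 2 * n := by omega
    rcases h with ⟨h1, -⟩ | ⟨h1, h2⟩
    · have := congrArg (fun x => match x with | Sum.inr a => a.1 | Sum.inl _ => 0) h1
      simp only [lf, b1, b1'] at this
      exact Fin.ext (by omega)
    · exfalso
      have e1 := congrArg (fun x => match x with | Sum.inr a => a.1 | Sum.inl _ => 0) h1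
      simp only [lf, b1, b2'] at e1
      split at e1 <;> omega
  rw [newE, ← Set.image_univ, Set.ncard_image_of_injective _ hinj, Set.ncard_univ]
  simp

end Cat2

/-- the Hamiltonian completion number of the caterpillar with exactly two
leaves at each path vertex equals `n`. -/
theorem caterpillar2_hamiltonianCompletion (n : ℕ) (hn : 1 ≤ n) :
    IsLeast {k : ℕ | ∃ H : SimpleGraph (Fin n ⊕ Fin (2 * n)), caterpillar2 n ≤ H ∧
      H.IsHamiltonian ∧ (H.edgeSet \ (caterpillar2 n).edgeSet).ncard = k} n := by
  have hn' : 0 < n := hn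
  constructor
  · exact ⟨Cat2.Hgraph n hn', le_sup_left, Cat2.hgraph_hamiltonian n hn',
      by rw [Cat2.diff_eq, Cat2.newE_ncard]⟩
  · rintro k ⟨H, hle, hham, hcard⟩
    have hc3 : 3 ≤ Fintype.card (Fin n ⊕ Fin (2 * n)) := by
      simp [Fintype.card_sum]; omega
    set D := H.edgeSet \ (caterpillar2 n).edgeSet with hD
    have hDfin : D.Finite := Set.toFinite _
    have hchoice : ∀ j : Fin (2 * n), ∃ e : Sym2 (Fin n ⊕ Fin (2 * n)),
        e ∈ D ∧ Sum.inr j ∈ e := by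
      intro j
      obtain ⟨x, y, hxy, hax, hay⟩ := Cat2.two_distinct_neighbors hham hc3 (Sum.inr j)
      have key : ¬ (caterpillar2 n).Adj (Sum.inr j) x ∨ ¬ (caterpillar2 n).Adj (Sum.inr j) y := by
        by_contra hcon
        push_neg at hcon
        obtain ⟨i, rfl, hi⟩ := (Cat2.cat_adj_inr_iff n j x).mp hcon.1
        obtain ⟨i', rfl, hi'⟩ := (Cat2.cat_adj_inr_iff n j y).mp hcon.2
        apply hxy
        have : i = i' := Fin.ext (by omega)
        rw [this]
      rcases key with hnc | hnc
      · exact ⟨s(Sum.inr j, x), ⟨H.mem_edgeSet.mpr hax, fun hm =>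
          hnc ((caterpillar2 n).mem_edgeSet.mp hm)⟩, Sym2.mem_mk_left _ _⟩
      · exact ⟨s(Sum.inr j, y), ⟨H.mem_edgeSet.mpr hay, fun hm =>
          hnc ((caterpillar2 n).mem_edgeSet.mp hm)⟩, Sym2.mem_mk_left _ _⟩
    choose f hf1 hf2 using hchoice
    have hfiber : ∀ e ∈ Finset.univ.image f,
        (Finset.univ.filter (fun j => f j = e)).card ≤ 2 := by
      intro e _
      by_contra hgt
      push_neg at hgt
      obtain ⟨a, b, c, ha, hb, hc, hab, hac, hbc⟩ := Finset.two_lt_card_iff.mp hgt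
      rw [Finset.mem_filter] at ha hb hc
      have hea : Sum.inr a ∈ e := ha.2 ▸ hf2 a
      have heb : Sum.inr b ∈ e := hb.2 ▸ hf2 b
      have hec : Sum.inr c ∈ e := hc.2 ▸ hf2 c
      have hne : (Sum.inr a : Fin n ⊕ Fin (2 * n)) ≠ Sum.inr b := by
        simpa using hab
      have heab : e = s(Sum.inr a, Sum.inr b) :=
        ((Sym2.mem_and_mem_iff hne).mp ⟨hea, heb⟩)
      rw [heab, Sym2.mem_iff] at hec
      rcases hec with h | h
      · exact hac (Sum.inr.inj h).symm
      · exact hbc (Sum.inr.inj h).symm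
    have hcard2 : (Finset.univ : Finset (Fin (2 * n))).card ≤
        2 * (Finset.univ.image f).card :=
      Finset.card_le_mul_card_image _ 2 hfiber
    have himg : Finset.univ.image f ⊆ hDfin.toFinset := by
      intro e he
      rw [Finset.mem_image] at he
      obtain ⟨j, -, rfl⟩ := he
      exact hDfin.mem_toFinset.mpr (hf1 j)
    have hcard3 : (Finset.univ.image f).card ≤ hDfin.toFinset.card :=
      Finset.card_le_card himg
    have hDcard : hDfin.toFinset.card = k := by
      rw [← Set.ncard_eq_toFinset_card _ hDfin, hcard]
    rw [Finset.card_univ, Fintype.card_fin] at hcard2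
    omega
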